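/- For any connected graph G with maximum degree Δ(G), edim(G) ≥ ⌈log₂ Δ(G)⌉. -/

import Mathlib

open SimpleGraph

/-- Distance from a vertex `v` to an edge `e = uw`: `min (d v u) (d v w)`. -/
noncomputable def edgeDist {V : Type*} (G : SimpleGraph V) (v : V) (e : Sym2 V) : ℕ :=
  Sym2.lift ⟨fun u w => min (G.dist v u) (G.dist v w), fun u w => by simp [min_comm]⟩ e

/-- `S` is an edge metric generator: every two distinct edges are distinguished
by some vertex of `S`. -/
def IsEdgeMetricGenerator {V : Type*} (G : SimpleGraph V) (S : Set V) : Prop :=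
  ∀ e₁ ∈ G.edgeSet, ∀ e₂ ∈ G.edgeSet, e₁ ≠ e₂ →
    ∃ v ∈ S, edgeDist G v e₁ ≠ edgeDist G v e₂

/-- The edge metric dimension: minimum cardinality of an edge metric generator. -/
noncomputable def edim {V : Type*} (G : SimpleGraph V) : ℕ :=
  sInf {k | ∃ S : Finset V, S.card = k ∧ IsEdgeMetricGenerator G ↑S}

lemma edgeDist_mk {V : Type*} (G : SimpleGraph V) (v x y : V) :
    edgeDist G v s(x, y) = min (G.dist v x) (G.dist v y) := rfl

lemma univ_gen {V : Type*} [Fintype V] (G : SimpleGraph V) (hG : G.Connected) :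
    IsEdgeMetricGenerator G ↑(Finset.univ : Finset V) := by
  intro e₁ he₁ e₂ he₂ hne
  induction e₁ with | h a b =>
  induction e₂ with | h c d =>
  rw [mem_edgeSet] at he₁ he₂
  -- find a vertex of e₁ not in e₂ (or vice versa)
  have key : ∀ x : V, x ∈ s(a,b) → x ∉ s(c,d) →
      ∃ v ∈ ↑(Finset.univ : Finset V), edgeDist G v s(a,b) ≠ edgeDist G v s(c,d) := by
    intro x hx hnx
    refine ⟨x, by simp, ?_⟩
    rw [Sym2.mem_iff] at hx hnx
    push_neg at hnx
    have h1 : edgeDist G x s(a,b) = 0 := by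
      rcases hx with rfl | rfl <;> simp [edgeDist_mk]
    have h2 : 0 < edgeDist G x s(c,d) := by
      rw [edgeDist_mk, lt_min_iff]
      exact ⟨hG.pos_dist_of_ne hnx.1, hG.pos_dist_of_ne hnx.2⟩
    omega
  by_cases hac : a = c
  · subst hac
    have hbd : b ≠ d := by rintro rfl; exact hne rfl
    have hba : b ≠ a := he₁.ne'
    exact key b (by simp) (by rw [Sym2.mem_iff]; push_neg; exact ⟨hba, hbd⟩)
  · by_cases had : a = d
    · subst had
      have hbc : b ≠ c := by rintro rfl; exact hne Sym2.eq_swap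
      have hba : b ≠ a := he₁.ne'
      exact key b (by simp) (by rw [Sym2.mem_iff]; push_neg; exact ⟨hbc, hba⟩)
    · exact key a (by simp) (by rw [Sym2.mem_iff]; push_neg; exact ⟨hac, had⟩)

lemma edgeDist_incidence {V : Type*} (G : SimpleGraph V) (hG : G.Connected)
    (u v : V) (e : Sym2 V) (he : e ∈ G.incidenceSet u) :
    edgeDist G v e = G.dist v u ∨ edgeDist G v e + 1 = G.dist v u := by
  obtain ⟨he', hu⟩ := he
  induction e with | h x y =>
  rw [edgeDist_mk]
  rw [mem_edgeSet] at he'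
  rw [Sym2.mem_iff] at hu
  -- wlog u = x
  have main : ∀ w : V, G.Adj u w →
      min (G.dist v u) (G.dist v w) = G.dist v u ∨
      min (G.dist v u) (G.dist v w) + 1 = G.dist v u := by
    intro w hw
    have htri : G.dist v u ≤ G.dist v w + G.dist w u := hG.dist_triangle
    have h1 : G.dist w u = 1 := dist_eq_one_iff_adj.2 hw.symm
    rcases le_or_gt (G.dist v u) (G.dist v w) with h | h
    · left; omega
    · right; omega
  rcases hu with rfl | rfl
  · exact main y he'
  · rw [min_comm]; exact main x he'.symm

theorem edim_ge_clog_maxDegree {V : Type*} [Fintype V] (G : SimpleGraph V)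
    [DecidableRel G.Adj] (hG : G.Connected) :
    Nat.clog 2 G.maxDegree ≤ edim G := by
  classical
  have hnonempty : Nonempty V := hG.nonempty
  -- the defining set is nonempty
  have hset : edim G ∈ {k | ∃ S : Finset V, S.card = k ∧ IsEdgeMetricGenerator G ↑S} := by
    apply Nat.sInf_mem
    exact ⟨_, Finset.univ, rfl, univ_gen G hG⟩
  obtain ⟨S, hScard, hSgen⟩ := hset
  -- vertex of maximal degree
  obtain ⟨u, hu⟩ := G.exists_maximal_degree_vertex
  rw [hu, ← G.card_incidenceFinset_eq_degree]
  rw [← hScard]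
  rw [Nat.clog_le_iff_le_pow (by norm_num)]
  -- injection from incident edges into S → Bool
  have hcard : (G.incidenceFinset u).card ≤ (Finset.univ : Finset (S → Bool)).card := by
    refine Finset.card_le_card_of_injOn
      (fun e (v : S) => decide (edgeDist G (v : V) e = G.dist (v : V) u))
      (fun _ _ => Finset.mem_univ _) ?_
    · intro e₁ he₁ e₂ he₂ hfe
      by_contra hne'
      rw [Finset.mem_coe, mem_incidenceFinset] at he₁ he₂
      obtain ⟨v, hvS, hv⟩ := hSgen e₁ (G.incidenceSet_subset u he₁) e₂
        (G.incidenceSet_subset u he₂) hne'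
      apply hv
      have h1 := edgeDist_incidence G hG u v e₁ he₁
      have h2 := edgeDist_incidence G hG u v e₂ he₂
      have := congrFun hfe ⟨v, hvS⟩
      simp only [decide_eq_decide] at this
      rcases h1 with h1 | h1 <;> rcases h2 with h2 | h2 <;> omega
  simpa [Finset.card_univ, Fintype.card_coe] using hcard
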